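/- Let μ be a point process on ℝ^d with Papangelou intensity r (Mecke identity), and let H : Γ × ℝ^d × ℝ^d → ℝ be a bounded measurable function such that ∫_Γ ∫∫ r(x,γ) r(y,γ) |H(γ+δ_x+δ_y,x,y)| dy dx μ(dγ) < ∞ and ∫_Γ ∫ γ(dx) ∫ (γ−δ_x)(dy) |H(γ,x,y)| μ(dγ) < ∞. Then the kernel r(x,γ)·D_x^+r(y,·)(γ) is symmetric under exchange of x and y in the following sense: ∫_Γ ∫_{ℝ^d} ∫_{ℝ^d} r(x,γ) [r(y,γ) − r(y,γ+δ_x)] H(γ+δ_x+δ_y,x,y) dy dx μ(dγ) = ∫_Γ ∫_{ℝ^d} ∫_{ℝ^d} r(y,γ) [r(x,γ) − r(x,γ+δ_y)] H(γ+δ_x+δ_y,x,y) dx dy μ(dγ); indeed both sides equal ∫_Γ ∫∫ r(x,γ) r(y,γ) H(γ+δ_x+δ_y,x,y) dy dx μ(dγ) − ∫_Γ ∫γ(dx)∫(γ−δ_x)(dy) H(γ,x,y) μ(dγ). -/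

import Mathlib

open MeasureTheory ENNReal
open scoped Classical

set_option maxHeartbeats 2000000

noncomputable section

abbrev Pt (d : ℕ) := EuclideanSpace ℝ (Fin d)
abbrev Config (d : ℕ) := MeasureTheory.Measure (Pt d)

/-- A locally finite point configuration: an `ℕ ∪ {∞}`-valued Radon measure,
i.e. a locally finite countable sum of Dirac measures. -/
def IsConfig {d : ℕ} (γ : Config d) : Prop :=
  IsLocallyFiniteMeasure γ ∧
    ∃ (I : Set ℕ) (x : I → Pt d), γ = Measure.sum fun i => Measure.dirac (x i)

/-- Birth difference operator. -/
def Dplus {d : ℕ} (F : Config d → ℝ) (x : Pt d) (γ : Config d) : ℝ :=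
  F γ - F (γ + Measure.dirac x)

/-- Death difference operator; set to `0` when `x` is not an atom of `γ`. -/
def Dminus {d : ℕ} (F : Config d → ℝ) (x : Pt d) (γ : Config d) : ℝ :=
  if γ {x} ≠ 0 then F (γ - Measure.dirac x) - F γ else 0

def DpDp {d : ℕ} (F : Config d → ℝ) (x y : Pt d) (γ : Config d) : ℝ :=
  Dplus F y γ - Dplus F y (γ + Measure.dirac x)

def DpDm {d : ℕ} (F : Config d → ℝ) (x y : Pt d) (γ : Config d) : ℝ :=
  Dminus F y γ - Dminus F y (γ + Measure.dirac x)

def DmDm {d : ℕ} (F : Config d → ℝ) (x y : Pt d) (γ : Config d) : ℝ :=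
  if γ {x} ≠ 0 then Dminus F y (γ - Measure.dirac x) - Dminus F y γ else 0

/-- Cylinder functions. -/
def IsCylinder {d : ℕ} (F : Config d → ℝ) : Prop :=
  ∃ (N : ℕ) (g : (Fin N → ℝ) → ℝ) (φ : Fin N → Pt d → ℝ),
    Continuous g ∧ (∃ C, ∀ v, |g v| ≤ C) ∧
    (∀ i, Continuous (φ i) ∧ HasCompactSupport (φ i)) ∧
    ∀ γ : Config d, F γ = g fun i => ∫ x, φ i x ∂γ

/-- The generator of the Glauber dynamics. -/
def Lgen {d : ℕ} (r : Pt d → Config d → ℝ) (F : Config d → ℝ) (γ : Config d) : ℝ :=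
  (∫ x, Dminus F x γ ∂γ) - ∫ x, r x γ * Dplus F x γ

def erealExpNeg (a : EReal) : ℝ := if a = ⊤ then 0 else Real.exp (-a.toReal)

/-- `e^{-E(x,γ)}` for `E(x,γ) = ∑_{y ∈ γ} φ(x-y)` (zero when the sum is not
absolutely convergent or hits `+∞`). -/
def expE {d : ℕ} (φ : Pt d → EReal) (x : Pt d) (γ : Config d) : ℝ :=
  if (Integrable (fun y => (φ (x - y)).toReal) γ ∧ ∀ᵐ y ∂γ, φ (x - y) ≠ ⊤)
  then Real.exp (-∫ y, (φ (x - y)).toReal ∂γ) else 0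

/-- Positive definite (locally bounded measurable) function, normalized at `0`. -/
def PosDefFn {d : ℕ} (u : Pt d → ℝ) : Prop :=
  u 0 ≤ 1 ∧ ∀ ψ : Pt d → ℝ, ContDiff ℝ (⊤ : ℕ∞) ψ → HasCompactSupport ψ →
    0 ≤ ∫ x, ∫ y, u (x - y) * ψ x * ψ y

/-- Regularity (R) of a pair potential. -/
def IsRegularPot {d : ℕ} (φ : Pt d → EReal) : Prop :=
  (∃ m : ℝ, ∀ x, (m : EReal) ≤ φ x) ∧
  ∃ R : ℝ, 0 < R ∧ ∃ ϕ : ℝ → ℝ,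
    (∀ t ∈ Set.Ici (0 : ℝ), 0 < ϕ t) ∧ AntitoneOn ϕ (Set.Ici 0) ∧
    IntegrableOn (fun t => t ^ (d - 1) * ϕ t) (Set.Ici R) ∧
    ∀ x : Pt d, R ≤ ‖x‖ → φ x ≠ ⊤ ∧ |(φ x).toReal| ≤ ϕ ‖x‖

/-- Number of points of the finite configuration `x` in the unit cube centered at `r ∈ ℤ^d`. -/
def cubeCount {d n : ℕ} (x : Fin n → Pt d) (r : Fin d → ℤ) : ℕ :=
  Nat.card {i : Fin n // ∀ j, (r j : ℝ) - 1 / 2 ≤ x i j ∧ x i j < (r j : ℝ) + 1 / 2}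

/-- Sum of the interaction over unordered pairs of distinct points (with multiplicity). -/
def pairSum {d n : ℕ} (φ : Pt d → EReal) (x : Fin n → Pt d) : EReal :=
  ∑ i : Fin n, ∑ j ∈ Finset.Ioi i, φ (x i - x j)

/-- Superstability (SS). -/
def IsSuperstablePot {d : ℕ} (φ : Pt d → EReal) : Prop :=
  ∃ A B : ℝ, 0 < A ∧ 0 ≤ B ∧ ∀ (n : ℕ) (x : Fin n → Pt d),
    ((∑' r : Fin d → ℤ,
        (A * (cubeCount x r : ℝ) ^ 2 - B * (cubeCount x r : ℝ)) : ℝ) : EReal)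
      ≤ pairSum φ x

/-- Stability (S). -/
def IsStablePot {d : ℕ} (φ : Pt d → EReal) : Prop :=
  ∃ B : ℝ, 0 ≤ B ∧ ∀ (n : ℕ) (x : Fin n → Pt d),
    ((-(B * n) : ℝ) : EReal) ≤ pairSum φ x

/-- The potential `φ = -ln(1-f)` associated to a Mayer function `f`. -/
def defpot {d : ℕ} (f : Pt d → ℝ) : Pt d → EReal :=
  fun x => if f x = 1 then (⊤ : EReal) else ((-Real.log (1 - f x) : ℝ) : EReal)

def erealAbs (a : EReal) : ℝ≥0∞ :=
  if a = ⊤ ∨ a = ⊥ then ⊤ else ENNReal.ofReal |a.toReal|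


/-! ### Auxiliary machinery for the proof of `kernel_symmetry` -/

section KSAux

open ProbabilityTheory Function

variable {d : ℕ}

lemma ks_meas_addDirac :
    Measurable fun p : Config d × Pt d => p.1 + Measure.dirac p.2 := by
  apply Measure.measurable_of_measurable_coe
  intro s hs
  have h1 : Measurable fun p : Config d × Pt d => p.1 s :=
    (Measure.measurable_coe hs).comp measurable_fst
  have h2 : Measurable fun p : Config d × Pt d => (Measure.dirac p.2 : Measure (Pt d)) s := by
    simp only [Measure.dirac_apply' _ hs]
    exact (measurable_one.indicator hs).comp measurable_snd
  simp only [Measure.add_apply]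
  exact h1.add h2

/-- Truncation of a measure to a closed ball, cut off to `0` if too large. -/
def ksTrunc (n k : ℕ) (γ : Config d) : Config d :=
  if γ (Metric.closedBall 0 n) ≤ k then γ.restrict (Metric.closedBall 0 n) else 0

lemma ksTrunc_measurable (n k : ℕ) : Measurable (ksTrunc (d := d) n k) := by
  apply Measure.measurable_of_measurable_coe
  intro s hs
  have hK : MeasurableSet (Metric.closedBall (0 : Pt d) n) := measurableSet_closedBall
  have heq : (fun γ : Config d => ksTrunc n k γ s)
      = fun γ : Config d =>
        if γ (Metric.closedBall 0 n) ≤ k then γ (s ∩ Metric.closedBall 0 n) else 0 := by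
    funext γ
    by_cases h : γ (Metric.closedBall (0 : Pt d) n) ≤ k
    · simp [ksTrunc, h, Measure.restrict_apply hs]
    · simp [ksTrunc, h]
  rw [heq]
  exact Measurable.ite (measurableSet_le (Measure.measurable_coe hK) measurable_const)
    (Measure.measurable_coe (hs.inter hK)) measurable_const

lemma ksTrunc_le (n k : ℕ) (γ : Config d) : ksTrunc n k γ ≤ γ := by
  unfold ksTrunc; split_ifs
  · exact Measure.restrict_le_self
  · exact Measure.zero_le γ

/-- The truncations as a finite kernel. -/
def ksKernel {β : Type*} [MeasurableSpace β] {π : β → Config d} (hπ : Measurable π)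
    (n k : ℕ) : Kernel β (Pt d) :=
  ⟨fun b => ksTrunc n k (π b), (ksTrunc_measurable n k).comp hπ⟩

lemma ksKernel_finite {β : Type*} [MeasurableSpace β] {π : β → Config d} (hπ : Measurable π)
    (n k : ℕ) : IsFiniteKernel (ksKernel hπ n k) := by
  refine ⟨⟨(k : ℝ≥0∞), ENNReal.natCast_lt_top k, fun b => ?_⟩⟩
  show ksTrunc n k (π b) Set.univ ≤ (k : ℝ≥0∞)
  unfold ksTrunc
  split_ifs with h
  · rw [Measure.restrict_apply_univ]; exact h
  · simp

lemma ks_meas_iSup {β : Type*} [MeasurableSpace β] {π : β → Config d} (hπ : Measurable π)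
    {F : β → Pt d → ℝ≥0∞} (hF : Measurable fun q : β × Pt d => F q.1 q.2) :
    Measurable fun b => ⨆ (n : ℕ) (k : ℕ), ∫⁻ x, F b x ∂(ksTrunc n k (π b)) := by
  refine Measurable.iSup fun n => Measurable.iSup fun k => ?_
  haveI := ksKernel_finite hπ n k
  exact Measurable.lintegral_kernel_prod_right' (κ := ksKernel hπ n k) hF

lemma ks_iSup_eq {γ : Config d} (hγ : IsLocallyFiniteMeasure γ) {f : Pt d → ℝ≥0∞}
    (hf : Measurable f) :
    ⨆ (n : ℕ) (k : ℕ), ∫⁻ x, f x ∂(ksTrunc n k γ) = ∫⁻ x, f x ∂γ := by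
  haveI := hγ
  haveI : IsFiniteMeasureOnCompacts γ := isFiniteMeasureOnCompacts_of_isLocallyFiniteMeasure
  apply le_antisymm
  · exact iSup_le fun n => iSup_le fun k => lintegral_mono' (ksTrunc_le n k γ) le_rfl
  · have hsup : ∀ x, (⨆ n : ℕ, (Metric.closedBall (0 : Pt d) n).indicator f x) = f x := by
      intro x
      apply le_antisymm
      · exact iSup_le fun n => Set.indicator_le_self _ _ x
      · obtain ⟨n, hn⟩ := exists_nat_ge ‖x‖
        refine le_trans ?_ (le_iSup _ n)
        rw [Set.indicator_of_mem (by simpa [mem_closedBall_zero_iff] using hn)]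
    calc ∫⁻ x, f x ∂γ
        = ∫⁻ x, ⨆ n : ℕ, (Metric.closedBall (0 : Pt d) n).indicator f x ∂γ := by
          simp_rw [hsup]
      _ = ⨆ n : ℕ, ∫⁻ x, (Metric.closedBall (0 : Pt d) n).indicator f x ∂γ := by
          refine lintegral_iSup (fun n => hf.indicator measurableSet_closedBall)
            (fun a b hab x => Set.indicator_le_indicator_of_subset
              (Metric.closedBall_subset_closedBall (by exact_mod_cast hab))
              (fun _ => zero_le) x)
      _ ≤ ⨆ (n : ℕ) (k : ℕ), ∫⁻ x, f x ∂(ksTrunc n k γ) := by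
          refine iSup_mono fun n => ?_
          rw [lintegral_indicator measurableSet_closedBall]
          obtain ⟨k, hk⟩ := ENNReal.exists_nat_gt
            ((isCompact_closedBall (0 : Pt d) ↑n).measure_lt_top (μ := γ)).ne
          refine le_trans (le_of_eq ?_) (le_iSup _ k)
          unfold ksTrunc
          rw [if_pos hk.le]

lemma ks_sum_split {I : Set ℕ} (a : I → Pt d) (j : I) :
    (Measure.sum fun i : I => Measure.dirac (a i))
      = (Measure.sum fun i : {i : I // i ≠ j} => Measure.dirac (a i)) + Measure.dirac (a j) := by
  ext s hs
  rw [Measure.add_apply, Measure.sum_apply _ hs, Measure.sum_apply _ hs]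
  rw [Summable.tsum_eq_add_tsum_ite' (f := fun i : I => Measure.dirac (a i) s) j ENNReal.summable,
    add_comm]
  congr 1
  refine Eq.symm ?_
  refine Eq.trans (b := ∑' i : I, ({i : I | i ≠ j}).indicator
      (fun i : I => Measure.dirac (a i) s) i) ?_ ?_
  · exact tsum_subtype {i : I | i ≠ j} fun i : I => Measure.dirac (a i) s
  · refine tsum_congr fun i => ?_
    by_cases h : i = j <;> simp [Set.indicator_apply, h, Function.update_apply]

lemma ks_sub_dirac {I : Set ℕ} (a : I → Pt d) (j : I) :
    (Measure.sum fun i : I => Measure.dirac (a i)) - Measure.dirac (a j)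
      = Measure.sum fun i : {i : I // i ≠ j} => Measure.dirac (a i) := by
  conv_lhs => rw [ks_sum_split a j]
  exact Measure.add_sub_cancel

lemma ks_lintegral_sum {ι : Type*} (a : ι → Pt d) (f : Pt d → ℝ≥0∞) :
    ∫⁻ y, f y ∂(Measure.sum fun i : ι => Measure.dirac (a i)) = ∑' i, f (a i) := by
  rw [lintegral_sum_measure]
  exact tsum_congr fun i => lintegral_dirac _ f

lemma ks_ae_range {I : Set ℕ} (a : I → Pt d) :
    ∀ᵐ y ∂(Measure.sum fun i : I => Measure.dirac (a i)), y ∈ Set.range a := by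
  have hm : MeasurableSet (Set.range a) := (Set.countable_range a).measurableSet
  rw [ae_iff]
  refine measure_mono_null (t := (Set.range a)ᶜ) (fun y hy => hy) ?_
  rw [Measure.sum_apply _ hm.compl]
  have hz : ∀ i : I, Measure.dirac (a i) (Set.range a)ᶜ = 0 := by
    intro i
    rw [Measure.dirac_apply' _ hm.compl]
    simp [Set.indicator_apply]
  simp [hz]

lemma ks_aemeasurable {γ : Config d} (hγ : IsConfig γ) {E : Type*} [MeasurableSpace E]
    (f : Pt d → E) : AEMeasurable f γ := by
  classical
  obtain ⟨hloc, I, a, hrep⟩ := hγ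
  refine ⟨fun y => if y ∈ Set.range a then f y else f 0, ?_, ?_⟩
  · intro s hs
    have hpre : (fun y => if y ∈ Set.range a then f y else f 0) ⁻¹' s
        = (Set.range a ∩ f ⁻¹' s) ∪ ((Set.range a)ᶜ ∩ (if f 0 ∈ s then Set.univ else ∅)) := by
      ext y
      by_cases hy : y ∈ Set.range a
      · rw [Set.mem_preimage, if_pos hy]
        by_cases h0 : f 0 ∈ s <;> simp [hy, h0]
      · rw [Set.mem_preimage, if_neg hy]
        by_cases h0 : f 0 ∈ s <;> simp [hy, h0]
    rw [hpre]
    refine MeasurableSet.union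
      (((Set.countable_range a).mono Set.inter_subset_left).measurableSet) ?_
    refine MeasurableSet.inter ((Set.countable_range a).measurableSet.compl) ?_
    split_ifs <;> simp
  · rw [hrep]
    filter_upwards [ks_ae_range a] with y hy
    simp [hy]

lemma ks_tsum_ne {ι : Type*} [DecidableEq ι] (g : ι → ℝ≥0∞) (j : ι) :
    (∑' i : {i : ι // i ≠ j}, g i) = ∑' i, if i = j then 0 else g i := by
  refine Eq.trans (b := ∑' i, ({i : ι | i ≠ j}).indicator g i) ?_ ?_
  · exact tsum_subtype {i : ι | i ≠ j} g
  · refine tsum_congr fun i => ?_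
    by_cases h : i = j <;> simp [Set.indicator_apply, h]

lemma ks_death_symm {γ : Config d} (hγ : IsConfig γ) (Φ : Pt d → Pt d → ℝ≥0∞) :
    ∫⁻ x, (∫⁻ y, Φ x y ∂(γ - Measure.dirac x)) ∂γ
      = ∫⁻ x, (∫⁻ y, Φ y x ∂(γ - Measure.dirac x)) ∂γ := by
  classical
  obtain ⟨hloc, I, a, hrep⟩ := hγ
  subst hrep
  have key : ∀ Ψ : Pt d → Pt d → ℝ≥0∞,
      (∫⁻ x, (∫⁻ y, Ψ x y
          ∂((Measure.sum fun i : I => Measure.dirac (a i)) - Measure.dirac x))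
        ∂(Measure.sum fun i : I => Measure.dirac (a i)))
        = ∑' (j : I) (i : I), if i = j then 0 else Ψ (a j) (a i) := by
    intro Ψ
    rw [ks_lintegral_sum]
    refine tsum_congr fun j => ?_
    rw [ks_sub_dirac a j, ks_lintegral_sum (fun i : {i : I // i ≠ j} => a i)]
    exact ks_tsum_ne (fun i : I => Ψ (a j) (a i)) j
  rw [key Φ, key fun x y => Φ y x]
  refine (ENNReal.tsum_comm (f := fun j i : I => if i = j then 0 else Φ (a j) (a i))).trans ?_
  refine tsum_congr fun j => tsum_congr fun i => ?_
  by_cases h : j = i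
  · subst h; simp
  · rw [if_neg h, if_neg (Ne.symm h)]

lemma ks_sfinite {γ : Config d} (hγ : IsConfig γ) : SFinite γ := by
  obtain ⟨-, I, a, hrep⟩ := hγ
  rw [hrep]
  infer_instance

lemma ks_loc_add {γ : Config d} (h : IsLocallyFiniteMeasure γ) (x : Pt d) :
    IsLocallyFiniteMeasure (γ + Measure.dirac x) := by
  constructor
  intro y
  obtain ⟨s, hs, hfin⟩ := h.finiteAtNhds y
  exact ⟨s, hs, by
    rw [Measure.add_apply]
    exact ENNReal.add_lt_top.2 ⟨hfin, measure_lt_top _ s⟩⟩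

lemma ks_death_repr {γ : Config d} (hγ : IsConfig γ)
    {Φ : Config d → Pt d → Pt d → ℝ≥0∞}
    (hΦm : Measurable fun p : Config d × Pt d × Pt d => Φ p.1 p.2.1 p.2.2)
    (hΦf : ∀ σ x y, Φ σ x y ≠ ⊤) :
    ∫⁻ x, ((⨆ (n : ℕ) (k : ℕ), ∫⁻ y, Φ γ x y ∂(ksTrunc n k γ)) - Φ γ x x) ∂γ
      = ∫⁻ x, (∫⁻ y, Φ γ x y ∂(γ - Measure.dirac x)) ∂γ := by
  obtain ⟨hloc, I, a, hrep⟩ := hγ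
  apply lintegral_congr_ae
  have hae : ∀ᵐ x ∂γ, x ∈ Set.range a := hrep ▸ ks_ae_range a
  filter_upwards [hae] with x hx
  obtain ⟨j, rfl⟩ := hx
  have hmeas : Measurable fun y => Φ γ (a j) y :=
    hΦm.comp (measurable_const.prodMk (measurable_const.prodMk measurable_id))
  rw [ks_iSup_eq hloc hmeas]
  have hdec : γ = (γ - Measure.dirac (a j)) + Measure.dirac (a j) := by
    rw [hrep, ks_sub_dirac a j]
    exact ks_sum_split a j
  have key : ∀ g : Pt d → ℝ≥0∞,
      ∫⁻ y, g y ∂γ = (∫⁻ y, g y ∂(γ - Measure.dirac (a j))) + g (a j) := by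
    intro g
    conv_lhs => rw [hdec]
    rw [lintegral_add_measure, lintegral_dirac]
  rw [key fun y => Φ γ (a j) y, ENNReal.add_sub_cancel_right (hΦf _ _ _)]

lemma ks_chain {d : ℕ} (μ : Measure (Config d))
    (hconf : ∀ᵐ γ ∂μ, IsConfig γ)
    (r : Pt d → Config d → ℝ)
    (hr : Measurable (Function.uncurry r))
    (hMecke : ∀ G : Pt d → Config d → ℝ≥0∞, Measurable (Function.uncurry G) →
      ∫⁻ γ, (∫⁻ x, G x γ ∂γ) ∂μ
        = ∫⁻ γ, (∫⁻ x, ENNReal.ofReal (r x γ) * G x (γ + Measure.dirac x)) ∂μ)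
    {Φ : Config d → Pt d → Pt d → ℝ≥0∞}
    (hΦm : Measurable fun p : Config d × Pt d × Pt d => Φ p.1 p.2.1 p.2.2)
    (hΦf : ∀ σ x y, Φ σ x y ≠ ⊤) :
    (∫⁻ γ, (∫⁻ x, ∫⁻ y, ENNReal.ofReal (r x γ) *
        ENNReal.ofReal (r y (γ + Measure.dirac x)) *
        Φ (γ + Measure.dirac x + Measure.dirac y) x y) ∂μ)
      = ∫⁻ γ, (∫⁻ x, (∫⁻ y, Φ γ x y ∂(γ - Measure.dirac x)) ∂γ) ∂μ := by
  classical
  have hG1 : Measurable fun p : Pt d × Config d =>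
      ∫⁻ y, ENNReal.ofReal (r y p.2) * Φ (p.2 + Measure.dirac y) p.1 y := by
    refine Measurable.lintegral_prod_right'
      (f := fun q : (Pt d × Config d) × Pt d =>
        ENNReal.ofReal (r q.2 q.1.2) * Φ (q.1.2 + Measure.dirac q.2) q.1.1 q.2) ?_
    refine Measurable.mul ?_ ?_
    · exact (hr.comp (measurable_snd.prodMk (measurable_snd.comp measurable_fst))).ennreal_ofReal
    · exact hΦm.comp ((ks_meas_addDirac.comp
        ((measurable_snd.comp measurable_fst).prodMk measurable_snd)).prodMk
        ((measurable_fst.comp measurable_fst).prodMk measurable_snd))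
  have hLL : Measurable fun p : Pt d × Config d =>
      ⨆ (n : ℕ) (k : ℕ), ∫⁻ x, Φ p.2 x p.1 ∂(ksTrunc n k p.2) := by
    refine ks_meas_iSup measurable_snd ?_
    exact hΦm.comp ((measurable_snd.comp measurable_fst).prodMk
      (measurable_snd.prodMk (measurable_fst.comp measurable_fst)))
  have hG2 : Measurable fun p : Pt d × Config d =>
      (⨆ (n : ℕ) (k : ℕ), ∫⁻ x, Φ p.2 x p.1 ∂(ksTrunc n k p.2)) - Φ p.2 p.1 p.1 :=
    hLL.sub (hΦm.comp (measurable_snd.prodMk (measurable_fst.prodMk measurable_fst)))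
  have M1 := hMecke (fun x γ => ∫⁻ y, ENNReal.ofReal (r y γ) * Φ (γ + Measure.dirac y) x y) hG1
  have M2 := hMecke (fun y γ =>
    (⨆ (n : ℕ) (k : ℕ), ∫⁻ x, Φ γ x y ∂(ksTrunc n k γ)) - Φ γ y y) hG2
  calc
    (∫⁻ γ, (∫⁻ x, ∫⁻ y, ENNReal.ofReal (r x γ) *
        ENNReal.ofReal (r y (γ + Measure.dirac x)) *
        Φ (γ + Measure.dirac x + Measure.dirac y) x y) ∂μ)
      = ∫⁻ γ, (∫⁻ x, ENNReal.ofReal (r x γ) *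
          ∫⁻ y, ENNReal.ofReal (r y (γ + Measure.dirac x)) *
            Φ ((γ + Measure.dirac x) + Measure.dirac y) x y) ∂μ := by
        refine lintegral_congr fun γ => lintegral_congr fun x => ?_
        rw [← lintegral_const_mul]
        · exact lintegral_congr fun y => mul_assoc _ _ _
        · refine Measurable.mul ?_ ?_
          · exact (hr.comp (measurable_id.prodMk measurable_const)).ennreal_ofReal
          · exact hΦm.comp ((ks_meas_addDirac.comp
              (measurable_const.prodMk measurable_id)).prodMk
              (measurable_const.prodMk measurable_id))
    _ = ∫⁻ γ, (∫⁻ x, (∫⁻ y, ENNReal.ofReal (r y γ) * Φ (γ + Measure.dirac y) x y) ∂γ) ∂μ :=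
        M1.symm
    _ = ∫⁻ γ, (∫⁻ y, ENNReal.ofReal (r y γ) *
          ((⨆ (n : ℕ) (k : ℕ), ∫⁻ x, Φ (γ + Measure.dirac y) x y
              ∂(ksTrunc n k (γ + Measure.dirac y))) -
            Φ (γ + Measure.dirac y) y y)) ∂μ := by
        refine lintegral_congr_ae ?_
        filter_upwards [hconf] with γ hγ
        haveI : SFinite γ := ks_sfinite hγ
        have hmeasf : Measurable (Function.uncurry fun x y : Pt d =>
            ENNReal.ofReal (r y γ) * Φ (γ + Measure.dirac y) x y) := by
          refine Measurable.mul ?_ ?_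
          · exact (hr.comp (measurable_snd.prodMk measurable_const)).ennreal_ofReal
          · exact hΦm.comp ((ks_meas_addDirac.comp
              (measurable_const.prodMk measurable_snd)).prodMk
              (measurable_fst.prodMk measurable_snd))
        rw [lintegral_lintegral_swap hmeasf.aemeasurable]
        refine lintegral_congr fun y => ?_
        have hxm : Measurable fun x => Φ (γ + Measure.dirac y) x y :=
          hΦm.comp (measurable_const.prodMk (measurable_id.prodMk measurable_const))
        rw [lintegral_const_mul _ hxm]
        congr 1
        rw [ks_iSup_eq (ks_loc_add hγ.1 y) hxm, lintegral_add_measure, lintegral_dirac,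
          ENNReal.add_sub_cancel_right (hΦf _ _ _)]
    _ = ∫⁻ γ, (∫⁻ y,
          ((⨆ (n : ℕ) (k : ℕ), ∫⁻ x, Φ γ x y ∂(ksTrunc n k γ)) - Φ γ y y) ∂γ) ∂μ :=
        M2.symm
    _ = ∫⁻ γ, (∫⁻ x, (∫⁻ y, Φ γ x y ∂(γ - Measure.dirac x)) ∂γ) ∂μ := by
        refine lintegral_congr_ae ?_
        filter_upwards [hconf] with γ hγ
        have hswapm : Measurable fun p : Config d × Pt d × Pt d => Φ p.1 p.2.2 p.2.1 :=
          hΦm.comp (measurable_fst.prodMk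
            ((measurable_snd.comp measurable_snd).prodMk
              (measurable_fst.comp measurable_snd)))
        have e1 := ks_death_repr hγ (Φ := fun σ u v => Φ σ v u) hswapm
          (fun σ u v => hΦf σ v u)
        rw [e1]
        exact ks_death_symm hγ fun u v => Φ γ v u

lemma ks_chain' {d : ℕ} (μ : Measure (Config d))
    (hconf : ∀ᵐ γ ∂μ, IsConfig γ)
    (r : Pt d → Config d → ℝ)
    (hr : Measurable (Function.uncurry r))
    (hMecke : ∀ G : Pt d → Config d → ℝ≥0∞, Measurable (Function.uncurry G) →
      ∫⁻ γ, (∫⁻ x, G x γ ∂γ) ∂μ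
        = ∫⁻ γ, (∫⁻ x, ENNReal.ofReal (r x γ) * G x (γ + Measure.dirac x)) ∂μ)
    {Φ : Config d → Pt d → Pt d → ℝ≥0∞}
    (hΦm : Measurable fun p : Config d × Pt d × Pt d => Φ p.1 p.2.1 p.2.2)
    (hΦf : ∀ σ x y, Φ σ x y ≠ ⊤) :
    (∫⁻ γ, (∫⁻ y, ∫⁻ x, ENNReal.ofReal (r y γ) *
        ENNReal.ofReal (r x (γ + Measure.dirac y)) *
        Φ (γ + Measure.dirac x + Measure.dirac y) x y) ∂μ)
      = ∫⁻ γ, (∫⁻ x, (∫⁻ y, Φ γ x y ∂(γ - Measure.dirac x)) ∂γ) ∂μ := by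
  have hswapm : Measurable fun p : Config d × Pt d × Pt d => Φ p.1 p.2.2 p.2.1 :=
    hΦm.comp (measurable_fst.prodMk
      ((measurable_snd.comp measurable_snd).prodMk (measurable_fst.comp measurable_snd)))
  have h := ks_chain μ hconf r hr hMecke (Φ := fun σ u v => Φ σ v u) hswapm
    (fun σ u v => hΦf σ v u)
  calc
    (∫⁻ γ, (∫⁻ y, ∫⁻ x, ENNReal.ofReal (r y γ) *
        ENNReal.ofReal (r x (γ + Measure.dirac y)) *
        Φ (γ + Measure.dirac x + Measure.dirac y) x y) ∂μ)
      = ∫⁻ γ, (∫⁻ u, ∫⁻ v, ENNReal.ofReal (r u γ) *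
          ENNReal.ofReal (r v (γ + Measure.dirac u)) *
          Φ (γ + Measure.dirac u + Measure.dirac v) v u) ∂μ := by
        refine lintegral_congr fun γ => lintegral_congr fun y => lintegral_congr fun x => ?_
        rw [add_right_comm]
    _ = ∫⁻ γ, (∫⁻ x, (∫⁻ y, Φ γ y x ∂(γ - Measure.dirac x)) ∂γ) ∂μ := h
    _ = ∫⁻ γ, (∫⁻ x, (∫⁻ y, Φ γ x y ∂(γ - Measure.dirac x)) ∂γ) ∂μ := by
        refine lintegral_congr_ae ?_
        filter_upwards [hconf] with γ hγ
        exact ks_death_symm hγ fun u v => Φ γ v u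

lemma ks_int_sub {X : Type*} [MeasurableSpace X] (ν : Measure X) {u v : X → ℝ}
    (hu : AEMeasurable u ν) (hv : AEMeasurable v ν)
    (hu0 : 0 ≤ᵐ[ν] u) (hv0 : 0 ≤ᵐ[ν] v)
    (hui : (∫⁻ x, ENNReal.ofReal (u x) ∂ν) ≠ ⊤)
    (hvi : (∫⁻ x, ENNReal.ofReal (v x) ∂ν) ≠ ⊤) :
    ∫ x, (u x - v x) ∂ν
      = (∫⁻ x, ENNReal.ofReal (u x) ∂ν).toReal - (∫⁻ x, ENNReal.ofReal (v x) ∂ν).toReal := by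
  have hiu : Integrable u ν := by
    refine ⟨hu.aestronglyMeasurable, ?_⟩
    rw [hasFiniteIntegral_iff_ofReal hu0]
    exact hui.lt_top
  have hiv : Integrable v ν := by
    refine ⟨hv.aestronglyMeasurable, ?_⟩
    rw [hasFiniteIntegral_iff_ofReal hv0]
    exact hvi.lt_top
  rw [integral_sub hiu hiv, integral_eq_lintegral_of_nonneg_ae hu0 hu.aestronglyMeasurable,
    integral_eq_lintegral_of_nonneg_ae hv0 hv.aestronglyMeasurable]

lemma ks_double_sub {X Y : Type*} [MeasurableSpace X] [MeasurableSpace Y]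
    (ν₁ : Measure X) (ν₂ : X → Measure Y) {f g h : X → Y → ℝ}
    (hfgh : ∀ x y, f x y = g x y - h x y)
    (hg0 : ∀ x y, 0 ≤ g x y) (hh0 : ∀ x y, 0 ≤ h x y)
    (hmg : ∀ᵐ x ∂ν₁, AEMeasurable (g x) (ν₂ x))
    (hmh : ∀ᵐ x ∂ν₁, AEMeasurable (h x) (ν₂ x))
    (hPm : AEMeasurable (fun x => ∫⁻ y, ENNReal.ofReal (g x y) ∂(ν₂ x)) ν₁)
    (hMm : AEMeasurable (fun x => ∫⁻ y, ENNReal.ofReal (h x y) ∂(ν₂ x)) ν₁)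
    (hP : (∫⁻ x, (∫⁻ y, ENNReal.ofReal (g x y) ∂(ν₂ x)) ∂ν₁) ≠ ⊤)
    (hM : (∫⁻ x, (∫⁻ y, ENNReal.ofReal (h x y) ∂(ν₂ x)) ∂ν₁) ≠ ⊤) :
    ∫ x, (∫ y, f x y ∂(ν₂ x)) ∂ν₁
      = (∫⁻ x, (∫⁻ y, ENNReal.ofReal (g x y) ∂(ν₂ x)) ∂ν₁).toReal
        - (∫⁻ x, (∫⁻ y, ENNReal.ofReal (h x y) ∂(ν₂ x)) ∂ν₁).toReal := by
  have hplt : ∀ᵐ x ∂ν₁, (∫⁻ y, ENNReal.ofReal (g x y) ∂(ν₂ x)) < ⊤ := ae_lt_top' hPm hP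
  have hqlt : ∀ᵐ x ∂ν₁, (∫⁻ y, ENNReal.ofReal (h x y) ∂(ν₂ x)) < ⊤ := ae_lt_top' hMm hM
  have hinner : (fun x => ∫ y, f x y ∂(ν₂ x)) =ᵐ[ν₁]
      fun x => (∫⁻ y, ENNReal.ofReal (g x y) ∂(ν₂ x)).toReal
        - (∫⁻ y, ENNReal.ofReal (h x y) ∂(ν₂ x)).toReal := by
    filter_upwards [hplt, hqlt, hmg, hmh] with x hpx hqx hgx hhx
    have h1 : ∫ y, f x y ∂(ν₂ x) = ∫ y, (g x y - h x y) ∂(ν₂ x) :=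
      integral_congr_ae (Filter.Eventually.of_forall fun y => hfgh x y)
    rw [h1, ks_int_sub (ν₂ x) hgx hhx (Filter.Eventually.of_forall (hg0 x))
      (Filter.Eventually.of_forall (hh0 x)) hpx.ne hqx.ne]
  rw [integral_congr_ae hinner,
    integral_sub (integrable_toReal_of_lintegral_ne_top hPm hP)
      (integrable_toReal_of_lintegral_ne_top hMm hM),
    integral_toReal hPm hplt, integral_toReal hMm hqlt]

lemma ks_int_toReal_sub {X : Type*} [MeasurableSpace X] (μ : Measure X) {V : X → ℝ}
    {p q : X → ℝ≥0∞} (hp : AEMeasurable p μ) (hq : AEMeasurable q μ)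
    (hpt : (∫⁻ x, p x ∂μ) ≠ ⊤) (hqt : (∫⁻ x, q x ∂μ) ≠ ⊤)
    (hV : V =ᵐ[μ] fun x => (p x).toReal - (q x).toReal) :
    ∫ x, V x ∂μ = (∫⁻ x, p x ∂μ).toReal - (∫⁻ x, q x ∂μ).toReal := by
  rw [integral_congr_ae hV,
    integral_sub (integrable_toReal_of_lintegral_ne_top hp hpt)
      (integrable_toReal_of_lintegral_ne_top hq hqt),
    integral_toReal hp (ae_lt_top' hp hpt), integral_toReal hq (ae_lt_top' hq hqt)]

lemma ks_ofReal_max (a : ℝ) : ENNReal.ofReal (max a 0) = ENNReal.ofReal a := by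
  rcases le_total a 0 with h | h
  · rw [max_eq_right h, ENNReal.ofReal_of_nonpos h, ENNReal.ofReal_zero]
  · rw [max_eq_left h]

lemma ks_leb_sub {d : ℕ} (s t K : Pt d → Pt d → ℝ)
    (hs0 : ∀ x y, 0 ≤ s x y) (ht0 : ∀ x y, 0 ≤ t x y)
    (hsm : Measurable fun z : Pt d × Pt d => s z.1 z.2)
    (htm : Measurable fun z : Pt d × Pt d => t z.1 z.2)
    (hKm : Measurable fun z : Pt d × Pt d => K z.1 z.2)
    (hSP : (∫⁻ x, ∫⁻ y, ENNReal.ofReal (s x y) * ENNReal.ofReal (K x y)) ≠ ⊤)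
    (hSM : (∫⁻ x, ∫⁻ y, ENNReal.ofReal (s x y) * ENNReal.ofReal (-K x y)) ≠ ⊤)
    (hTP : (∫⁻ x, ∫⁻ y, ENNReal.ofReal (t x y) * ENNReal.ofReal (K x y)) ≠ ⊤)
    (hTM : (∫⁻ x, ∫⁻ y, ENNReal.ofReal (t x y) * ENNReal.ofReal (-K x y)) ≠ ⊤) :
    (∫ x, ∫ y, (s x y - t x y) * K x y)
      = ((∫⁻ x, ∫⁻ y, ENNReal.ofReal (s x y) * ENNReal.ofReal (K x y))
          + ∫⁻ x, ∫⁻ y, ENNReal.ofReal (t x y) * ENNReal.ofReal (-K x y)).toReal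
        - ((∫⁻ x, ∫⁻ y, ENNReal.ofReal (s x y) * ENNReal.ofReal (-K x y))
          + ∫⁻ x, ∫⁻ y, ENNReal.ofReal (t x y) * ENNReal.ofReal (K x y)).toReal := by
  have hofg : ∀ x y : Pt d, ENNReal.ofReal (s x y * max (K x y) 0 + t x y * max (-K x y) 0)
      = ENNReal.ofReal (s x y) * ENNReal.ofReal (K x y)
        + ENNReal.ofReal (t x y) * ENNReal.ofReal (-K x y) := by
    intro x y
    rw [ENNReal.ofReal_add (mul_nonneg (hs0 x y) (le_max_right _ _))
        (mul_nonneg (ht0 x y) (le_max_right _ _)),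
      ENNReal.ofReal_mul (hs0 x y), ENNReal.ofReal_mul (ht0 x y),
      ks_ofReal_max, ks_ofReal_max]
  have hofh : ∀ x y : Pt d, ENNReal.ofReal (s x y * max (-K x y) 0 + t x y * max (K x y) 0)
      = ENNReal.ofReal (s x y) * ENNReal.ofReal (-K x y)
        + ENNReal.ofReal (t x y) * ENNReal.ofReal (K x y) := by
    intro x y
    rw [ENNReal.ofReal_add (mul_nonneg (hs0 x y) (le_max_right _ _))
        (mul_nonneg (ht0 x y) (le_max_right _ _)),
      ENNReal.ofReal_mul (hs0 x y), ENNReal.ofReal_mul (ht0 x y),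
      ks_ofReal_max, ks_ofReal_max]
  -- inner measurabilities (as functions of y, for fixed x)
  have hySK : ∀ x : Pt d, Measurable fun y =>
      ENNReal.ofReal (s x y) * ENNReal.ofReal (K x y) := fun x =>
    ((hsm.comp (measurable_const.prodMk measurable_id)).ennreal_ofReal).mul
      ((hKm.comp (measurable_const.prodMk measurable_id)).ennreal_ofReal)
  have hySK' : ∀ x : Pt d, Measurable fun y =>
      ENNReal.ofReal (s x y) * ENNReal.ofReal (-K x y) := fun x =>
    ((hsm.comp (measurable_const.prodMk measurable_id)).ennreal_ofReal).mul
      (((hKm.comp (measurable_const.prodMk measurable_id)).neg).ennreal_ofReal)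
  have hyTK : ∀ x : Pt d, Measurable fun y =>
      ENNReal.ofReal (t x y) * ENNReal.ofReal (K x y) := fun x =>
    ((htm.comp (measurable_const.prodMk measurable_id)).ennreal_ofReal).mul
      ((hKm.comp (measurable_const.prodMk measurable_id)).ennreal_ofReal)
  have hyTK' : ∀ x : Pt d, Measurable fun y =>
      ENNReal.ofReal (t x y) * ENNReal.ofReal (-K x y) := fun x =>
    ((htm.comp (measurable_const.prodMk measurable_id)).ennreal_ofReal).mul
      (((hKm.comp (measurable_const.prodMk measurable_id)).neg).ennreal_ofReal)
  -- x-level measurabilities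
  have hxSK : Measurable fun x => ∫⁻ y, ENNReal.ofReal (s x y) * ENNReal.ofReal (K x y) :=
    Measurable.lintegral_prod_right'
      (f := fun z : Pt d × Pt d => ENNReal.ofReal (s z.1 z.2) * ENNReal.ofReal (K z.1 z.2))
      (hsm.ennreal_ofReal.mul hKm.ennreal_ofReal)
  have hxSK' : Measurable fun x => ∫⁻ y, ENNReal.ofReal (s x y) * ENNReal.ofReal (-K x y) :=
    Measurable.lintegral_prod_right'
      (f := fun z : Pt d × Pt d => ENNReal.ofReal (s z.1 z.2) * ENNReal.ofReal (-K z.1 z.2))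
      (hsm.ennreal_ofReal.mul hKm.neg.ennreal_ofReal)
  have hxTK : Measurable fun x => ∫⁻ y, ENNReal.ofReal (t x y) * ENNReal.ofReal (K x y) :=
    Measurable.lintegral_prod_right'
      (f := fun z : Pt d × Pt d => ENNReal.ofReal (t z.1 z.2) * ENNReal.ofReal (K z.1 z.2))
      (htm.ennreal_ofReal.mul hKm.ennreal_ofReal)
  have hxTK' : Measurable fun x => ∫⁻ y, ENNReal.ofReal (t x y) * ENNReal.ofReal (-K x y) :=
    Measurable.lintegral_prod_right'
      (f := fun z : Pt d × Pt d => ENNReal.ofReal (t z.1 z.2) * ENNReal.ofReal (-K z.1 z.2))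
      (htm.ennreal_ofReal.mul hKm.neg.ennreal_ofReal)
  have hgsplit : (∫⁻ x, ∫⁻ y,
      ENNReal.ofReal (s x y * max (K x y) 0 + t x y * max (-K x y) 0))
      = (∫⁻ x, ∫⁻ y, ENNReal.ofReal (s x y) * ENNReal.ofReal (K x y))
        + ∫⁻ x, ∫⁻ y, ENNReal.ofReal (t x y) * ENNReal.ofReal (-K x y) := by
    calc (∫⁻ x, ∫⁻ y, ENNReal.ofReal (s x y * max (K x y) 0 + t x y * max (-K x y) 0))
        = ∫⁻ x, ∫⁻ y, (ENNReal.ofReal (s x y) * ENNReal.ofReal (K x y)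
            + ENNReal.ofReal (t x y) * ENNReal.ofReal (-K x y)) :=
          lintegral_congr fun x => lintegral_congr fun y => hofg x y
      _ = ∫⁻ x, ((∫⁻ y, ENNReal.ofReal (s x y) * ENNReal.ofReal (K x y))
            + ∫⁻ y, ENNReal.ofReal (t x y) * ENNReal.ofReal (-K x y)) :=
          lintegral_congr fun x => lintegral_add_left (hySK x) _
      _ = _ := lintegral_add_left hxSK _
  have hhsplit : (∫⁻ x, ∫⁻ y,
      ENNReal.ofReal (s x y * max (-K x y) 0 + t x y * max (K x y) 0))
      = (∫⁻ x, ∫⁻ y, ENNReal.ofReal (s x y) * ENNReal.ofReal (-K x y))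
        + ∫⁻ x, ∫⁻ y, ENNReal.ofReal (t x y) * ENNReal.ofReal (K x y) := by
    calc (∫⁻ x, ∫⁻ y, ENNReal.ofReal (s x y * max (-K x y) 0 + t x y * max (K x y) 0))
        = ∫⁻ x, ∫⁻ y, (ENNReal.ofReal (s x y) * ENNReal.ofReal (-K x y)
            + ENNReal.ofReal (t x y) * ENNReal.ofReal (K x y)) :=
          lintegral_congr fun x => lintegral_congr fun y => hofh x y
      _ = ∫⁻ x, ((∫⁻ y, ENNReal.ofReal (s x y) * ENNReal.ofReal (-K x y))
            + ∫⁻ y, ENNReal.ofReal (t x y) * ENNReal.ofReal (K x y)) :=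
          lintegral_congr fun x => lintegral_add_left (hySK' x) _
      _ = _ := lintegral_add_left hxSK' _
  have hmg : Measurable fun z : Pt d × Pt d =>
      s z.1 z.2 * max (K z.1 z.2) 0 + t z.1 z.2 * max (-K z.1 z.2) 0 :=
    (hsm.mul (hKm.max measurable_const)).add (htm.mul (hKm.neg.max measurable_const))
  have hmh : Measurable fun z : Pt d × Pt d =>
      s z.1 z.2 * max (-K z.1 z.2) 0 + t z.1 z.2 * max (K z.1 z.2) 0 :=
    (hsm.mul (hKm.neg.max measurable_const)).add (htm.mul (hKm.max measurable_const))
  have e := ks_double_sub (volume : Measure (Pt d)) (fun _ => (volume : Measure (Pt d)))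
    (f := fun x y => (s x y - t x y) * K x y)
    (g := fun x y => s x y * max (K x y) 0 + t x y * max (-K x y) 0)
    (h := fun x y => s x y * max (-K x y) 0 + t x y * max (K x y) 0)
    (fun x y => by
      have hK := max_zero_sub_max_neg_zero_eq_self (K x y)
      linear_combination (t x y - s x y) * hK)
    (fun x y => add_nonneg (mul_nonneg (hs0 x y) (le_max_right _ _))
      (mul_nonneg (ht0 x y) (le_max_right _ _)))
    (fun x y => add_nonneg (mul_nonneg (hs0 x y) (le_max_right _ _))
      (mul_nonneg (ht0 x y) (le_max_right _ _)))
    (Filter.Eventually.of_forall fun x =>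
      (hmg.comp (measurable_const.prodMk measurable_id)).aemeasurable)
    (Filter.Eventually.of_forall fun x =>
      (hmh.comp (measurable_const.prodMk measurable_id)).aemeasurable)
    (Measurable.lintegral_prod_right'
      (f := fun z : Pt d × Pt d => ENNReal.ofReal
        (s z.1 z.2 * max (K z.1 z.2) 0 + t z.1 z.2 * max (-K z.1 z.2) 0))
      hmg.ennreal_ofReal).aemeasurable
    (Measurable.lintegral_prod_right'
      (f := fun z : Pt d × Pt d => ENNReal.ofReal
        (s z.1 z.2 * max (-K z.1 z.2) 0 + t z.1 z.2 * max (K z.1 z.2) 0))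
      hmh.ennreal_ofReal).aemeasurable
    (by rw [hgsplit]; exact ENNReal.add_ne_top.2 ⟨hSP, hTM⟩)
    (by rw [hhsplit]; exact ENNReal.add_ne_top.2 ⟨hSM, hTP⟩)
  calc (∫ x, ∫ y, (s x y - t x y) * K x y) = _ := e
    _ = _ := by rw [hgsplit, hhsplit]

lemma ksTrunc_isFinite {d : ℕ} (n k : ℕ) (γ : Config d) : IsFiniteMeasure (ksTrunc n k γ) := by
  constructor
  unfold ksTrunc
  split_ifs with h
  · rw [Measure.restrict_apply_univ]
    exact lt_of_le_of_lt h (ENNReal.natCast_lt_top k)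
  · simp

lemma ks_slice_meas {d : ℕ} {γ : Config d} {Φ : Config d → Pt d → Pt d → ℝ≥0∞}
    (hΦm : Measurable fun p : Config d × Pt d × Pt d => Φ p.1 p.2.1 p.2.2) :
    Measurable fun x : Pt d =>
      (⨆ (n' : ℕ) (k' : ℕ), ∫⁻ y, Φ γ x y ∂(ksTrunc n' k' γ)) - Φ γ x x := by
  refine Measurable.sub ?_ ?_
  · refine Measurable.iSup fun n' => Measurable.iSup fun k' => ?_
    haveI := ksTrunc_isFinite n' k' γ
    exact Measurable.lintegral_prod_right'
      (f := fun z : Pt d × Pt d => Φ γ z.1 z.2)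
      (hΦm.comp (measurable_const.prodMk (measurable_fst.prodMk measurable_snd)))
  · exact hΦm.comp (measurable_const.prodMk (measurable_id.prodMk measurable_id))

end KSAux

/-- Symmetry of the kernel `r(x,γ)·D_x⁺r(y,·)(γ)` under exchange of `x` and `y`. -/
theorem kernel_symmetry {d : ℕ}
    (μ : Measure (Config d)) [IsProbabilityMeasure μ]
    (hconf : ∀ᵐ γ ∂μ, IsConfig γ)
    (r : Pt d → Config d → ℝ) (hrpos : ∀ x γ, 0 ≤ r x γ)
    (hr : Measurable (Function.uncurry r))
    (hMecke : ∀ G : Pt d → Config d → ℝ≥0∞, Measurable (Function.uncurry G) →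
      ∫⁻ γ, (∫⁻ x, G x γ ∂γ) ∂μ
        = ∫⁻ γ, (∫⁻ x, ENNReal.ofReal (r x γ) * G x (γ + Measure.dirac x)) ∂μ)
    (H : Config d → Pt d → Pt d → ℝ)
    (hHmeas : Measurable fun p : Config d × Pt d × Pt d => H p.1 p.2.1 p.2.2)
    (hHbd : ∃ C, ∀ γ x y, |H γ x y| ≤ C)
    (hH1 : ∫⁻ γ, (∫⁻ x, ∫⁻ y, ENNReal.ofReal (r x γ) * ENNReal.ofReal (r y γ) *
        ENNReal.ofReal |H (γ + Measure.dirac x + Measure.dirac y) x y|) ∂μ < ⊤)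
    (hH2 : ∫⁻ γ, (∫⁻ x, (∫⁻ y, ENNReal.ofReal |H γ x y| ∂(γ - Measure.dirac x)) ∂γ) ∂μ < ⊤) :
    (∫ γ, (∫ x, ∫ y, r x γ * (r y γ - r y (γ + Measure.dirac x)) *
          H (γ + Measure.dirac x + Measure.dirac y) x y) ∂μ
      = ∫ γ, (∫ y, ∫ x, r y γ * (r x γ - r x (γ + Measure.dirac y)) *
          H (γ + Measure.dirac x + Measure.dirac y) x y) ∂μ) ∧
    (∫ γ, (∫ x, ∫ y, r x γ * (r y γ - r y (γ + Measure.dirac x)) *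
          H (γ + Measure.dirac x + Measure.dirac y) x y) ∂μ
      = (∫ γ, (∫ x, ∫ y, r x γ * r y γ *
            H (γ + Measure.dirac x + Measure.dirac y) x y) ∂μ)
        - ∫ γ, (∫ x, (∫ y, H γ x y ∂(γ - Measure.dirac x)) ∂γ) ∂μ) := by
  classical
  set Φp : Config d → Pt d → Pt d → ℝ≥0∞ := fun σ x y => ENNReal.ofReal (H σ x y) with hΦpdef
  set Φm : Config d → Pt d → Pt d → ℝ≥0∞ := fun σ x y => ENNReal.ofReal (-H σ x y) with hΦmdef
  have hΦpm : Measurable fun p : Config d × Pt d × Pt d => Φp p.1 p.2.1 p.2.2 := by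
    simp only [hΦpdef]; exact hHmeas.ennreal_ofReal
  have hΦmm : Measurable fun p : Config d × Pt d × Pt d => Φm p.1 p.2.1 p.2.2 := by
    simp only [hΦmdef]; exact hHmeas.neg.ennreal_ofReal
  have hΦpf : ∀ σ x y, Φp σ x y ≠ ⊤ := by
    intro σ x y; simp only [hΦpdef]; exact ENNReal.ofReal_ne_top
  have hΦmf : ∀ σ x y, Φm σ x y ≠ ⊤ := by
    intro σ x y; simp only [hΦmdef]; exact ENNReal.ofReal_ne_top
  -- three-variable measurability blocks
  have m_add1 : Measurable fun p : Config d × Pt d × Pt d => p.1 + Measure.dirac p.2.1 :=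
    ks_meas_addDirac.comp (measurable_fst.prodMk (measurable_fst.comp measurable_snd))
  have m_add1y : Measurable fun p : Config d × Pt d × Pt d => p.1 + Measure.dirac p.2.2 :=
    ks_meas_addDirac.comp (measurable_fst.prodMk (measurable_snd.comp measurable_snd))
  have m_add2 : Measurable fun p : Config d × Pt d × Pt d =>
      p.1 + Measure.dirac p.2.1 + Measure.dirac p.2.2 :=
    ks_meas_addDirac.comp (m_add1.prodMk (measurable_snd.comp measurable_snd))
  have m_rx : Measurable fun p : Config d × Pt d × Pt d => ENNReal.ofReal (r p.2.1 p.1) :=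
    (hr.comp ((measurable_fst.comp measurable_snd).prodMk measurable_fst)).ennreal_ofReal
  have m_ry : Measurable fun p : Config d × Pt d × Pt d => ENNReal.ofReal (r p.2.2 p.1) :=
    (hr.comp ((measurable_snd.comp measurable_snd).prodMk measurable_fst)).ennreal_ofReal
  have m_ry' : Measurable fun p : Config d × Pt d × Pt d =>
      ENNReal.ofReal (r p.2.2 (p.1 + Measure.dirac p.2.1)) :=
    (hr.comp ((measurable_snd.comp measurable_snd).prodMk m_add1)).ennreal_ofReal
  have m_rx' : Measurable fun p : Config d × Pt d × Pt d =>
      ENNReal.ofReal (r p.2.1 (p.1 + Measure.dirac p.2.2)) :=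
    (hr.comp ((measurable_fst.comp measurable_snd).prodMk m_add1y)).ennreal_ofReal
  have m_Hp3 : Measurable fun p : Config d × Pt d × Pt d =>
      Φp (p.1 + Measure.dirac p.2.1 + Measure.dirac p.2.2) p.2.1 p.2.2 :=
    hΦpm.comp (m_add2.prodMk ((measurable_fst.comp measurable_snd).prodMk
      (measurable_snd.comp measurable_snd)))
  have m_Hm3 : Measurable fun p : Config d × Pt d × Pt d =>
      Φm (p.1 + Measure.dirac p.2.1 + Measure.dirac p.2.2) p.2.1 p.2.2 :=
    hΦmm.comp (m_add2.prodMk ((measurable_fst.comp measurable_snd).prodMk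
      (measurable_snd.comp measurable_snd)))
  have meas3 : ∀ {F : Config d × Pt d × Pt d → ℝ≥0∞}, Measurable F →
      Measurable fun γ : Config d => ∫⁻ x, ∫⁻ y, F (γ, x, y) := by
    intro F hF
    exact Measurable.lintegral_prod_right'
      (f := fun p : Config d × Pt d => ∫⁻ y, F (p.1, p.2, y))
      (Measurable.lintegral_prod_right'
        (f := fun q : (Config d × Pt d) × Pt d => F (q.1.1, q.1.2, q.2))
        (hF.comp ((measurable_fst.comp measurable_fst).prodMk
          ((measurable_snd.comp measurable_fst).prodMk measurable_snd))))
  have meas3' : ∀ {F : Config d × Pt d × Pt d → ℝ≥0∞}, Measurable F →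
      Measurable fun γ : Config d => ∫⁻ y, ∫⁻ x, F (γ, x, y) := by
    intro F hF
    exact Measurable.lintegral_prod_right'
      (f := fun p : Config d × Pt d => ∫⁻ x, F (p.1, x, p.2))
      (Measurable.lintegral_prod_right'
        (f := fun q : (Config d × Pt d) × Pt d => F (q.1.1, q.2, q.1.2))
        (hF.comp ((measurable_fst.comp measurable_fst).prodMk
          (measurable_snd.prodMk (measurable_snd.comp measurable_fst)))))
  -- the γ-functionals
  set aP : Config d → ℝ≥0∞ := fun γ => ∫⁻ x, ∫⁻ y, ENNReal.ofReal (r x γ) *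
    ENNReal.ofReal (r y γ) * Φp (γ + Measure.dirac x + Measure.dirac y) x y with haPdef
  set aM : Config d → ℝ≥0∞ := fun γ => ∫⁻ x, ∫⁻ y, ENNReal.ofReal (r x γ) *
    ENNReal.ofReal (r y γ) * Φm (γ + Measure.dirac x + Measure.dirac y) x y with haMdef
  set bP : Config d → ℝ≥0∞ := fun γ => ∫⁻ x, ∫⁻ y, ENNReal.ofReal (r x γ) *
    ENNReal.ofReal (r y (γ + Measure.dirac x)) *
    Φp (γ + Measure.dirac x + Measure.dirac y) x y with hbPdef
  set bM : Config d → ℝ≥0∞ := fun γ => ∫⁻ x, ∫⁻ y, ENNReal.ofReal (r x γ) *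
    ENNReal.ofReal (r y (γ + Measure.dirac x)) *
    Φm (γ + Measure.dirac x + Measure.dirac y) x y with hbMdef
  set b'P : Config d → ℝ≥0∞ := fun γ => ∫⁻ y, ∫⁻ x, ENNReal.ofReal (r y γ) *
    ENNReal.ofReal (r x (γ + Measure.dirac y)) *
    Φp (γ + Measure.dirac x + Measure.dirac y) x y with hb'Pdef
  set b'M : Config d → ℝ≥0∞ := fun γ => ∫⁻ y, ∫⁻ x, ENNReal.ofReal (r y γ) *
    ENNReal.ofReal (r x (γ + Measure.dirac y)) *
    Φm (γ + Measure.dirac x + Measure.dirac y) x y with hb'Mdef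
  set eP : Config d → ℝ≥0∞ :=
    fun γ => ∫⁻ x, (∫⁻ y, Φp γ x y ∂(γ - Measure.dirac x)) ∂γ with hePdef
  set eM : Config d → ℝ≥0∞ :=
    fun γ => ∫⁻ x, (∫⁻ y, Φm γ x y ∂(γ - Measure.dirac x)) ∂γ with heMdef
  set dP : Config d → ℝ≥0∞ := fun γ => ⨆ (n : ℕ) (k : ℕ), ∫⁻ x,
    ((⨆ (n' : ℕ) (k' : ℕ), ∫⁻ y, Φp γ x y ∂(ksTrunc n' k' γ)) - Φp γ x x)
      ∂(ksTrunc n k γ) with hdPdef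
  set dM : Config d → ℝ≥0∞ := fun γ => ⨆ (n : ℕ) (k : ℕ), ∫⁻ x,
    ((⨆ (n' : ℕ) (k' : ℕ), ∫⁻ y, Φm γ x y ∂(ksTrunc n' k' γ)) - Φm γ x x)
      ∂(ksTrunc n k γ) with hdMdef
  -- measurability of the functionals
  have haPm : Measurable aP := by rw [haPdef]; exact meas3 ((m_rx.mul m_ry).mul m_Hp3)
  have haMm : Measurable aM := by rw [haMdef]; exact meas3 ((m_rx.mul m_ry).mul m_Hm3)
  have hbPm : Measurable bP := by rw [hbPdef]; exact meas3 ((m_rx.mul m_ry').mul m_Hp3)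
  have hbMm : Measurable bM := by rw [hbMdef]; exact meas3 ((m_rx.mul m_ry').mul m_Hm3)
  have hb'Pm : Measurable b'P := by rw [hb'Pdef]; exact meas3' ((m_ry.mul m_rx').mul m_Hp3)
  have hb'Mm : Measurable b'M := by rw [hb'Mdef]; exact meas3' ((m_ry.mul m_rx').mul m_Hm3)
  have hgPm : Measurable fun q : Config d × Pt d =>
      (⨆ (n' : ℕ) (k' : ℕ), ∫⁻ y, Φp q.1 q.2 y ∂(ksTrunc n' k' q.1)) - Φp q.1 q.2 q.2 := by
    refine Measurable.sub ?_ ?_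
    · exact ks_meas_iSup measurable_fst (hΦpm.comp
        ((measurable_fst.comp measurable_fst).prodMk
          ((measurable_snd.comp measurable_fst).prodMk measurable_snd)))
    · exact hΦpm.comp (measurable_fst.prodMk (measurable_snd.prodMk measurable_snd))
  have hgMm : Measurable fun q : Config d × Pt d =>
      (⨆ (n' : ℕ) (k' : ℕ), ∫⁻ y, Φm q.1 q.2 y ∂(ksTrunc n' k' q.1)) - Φm q.1 q.2 q.2 := by
    refine Measurable.sub ?_ ?_
    · exact ks_meas_iSup measurable_fst (hΦmm.comp
        ((measurable_fst.comp measurable_fst).prodMk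
          ((measurable_snd.comp measurable_fst).prodMk measurable_snd)))
    · exact hΦmm.comp (measurable_fst.prodMk (measurable_snd.prodMk measurable_snd))
  have hdPm : Measurable dP := by
    rw [hdPdef]; exact ks_meas_iSup measurable_id hgPm
  have hdMm : Measurable dM := by
    rw [hdMdef]; exact ks_meas_iSup measurable_id hgMm
  -- the chain identities from the Mecke equation
  have chainP : ∫⁻ γ, bP γ ∂μ = ∫⁻ γ, eP γ ∂μ := by
    simp only [hbPdef, hePdef]
    exact ks_chain μ hconf r hr hMecke hΦpm hΦpf
  have chainM : ∫⁻ γ, bM γ ∂μ = ∫⁻ γ, eM γ ∂μ := by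
    simp only [hbMdef, heMdef]
    exact ks_chain μ hconf r hr hMecke hΦmm hΦmf
  have chain'P : ∫⁻ γ, b'P γ ∂μ = ∫⁻ γ, eP γ ∂μ := by
    simp only [hb'Pdef, hePdef]
    exact ks_chain' μ hconf r hr hMecke hΦpm hΦpf
  have chain'M : ∫⁻ γ, b'M γ ∂μ = ∫⁻ γ, eM γ ∂μ := by
    simp only [hb'Mdef, heMdef]
    exact ks_chain' μ hconf r hr hMecke hΦmm hΦmf
  -- identification of dP with eP on configurations
  have hdP_eq : ∀ γ, IsConfig γ → dP γ = eP γ := by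
    intro γ hγ
    have hx : Measurable fun x : Pt d =>
        (⨆ (n' : ℕ) (k' : ℕ), ∫⁻ y, Φp γ x y ∂(ksTrunc n' k' γ)) - Φp γ x x :=
      ks_slice_meas hΦpm
    simp only [hdPdef, hePdef]
    rw [ks_iSup_eq hγ.1 hx]
    exact ks_death_repr hγ hΦpm hΦpf
  have hdM_eq : ∀ γ, IsConfig γ → dM γ = eM γ := by
    intro γ hγ
    have hx : Measurable fun x : Pt d =>
        (⨆ (n' : ℕ) (k' : ℕ), ∫⁻ y, Φm γ x y ∂(ksTrunc n' k' γ)) - Φm γ x x :=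
      ks_slice_meas hΦmm
    simp only [hdMdef, heMdef]
    rw [ks_iSup_eq hγ.1 hx]
    exact ks_death_repr hγ hΦmm hΦmf
  -- finiteness
  have hAp : (∫⁻ γ, aP γ ∂μ) ≠ ⊤ := by
    simp only [haPdef, hΦpdef]
    refine ne_top_of_le_ne_top hH1.ne ?_
    refine lintegral_mono fun γ => lintegral_mono fun x => lintegral_mono fun y => ?_
    exact mul_le_mul_right (ENNReal.ofReal_le_ofReal (le_abs_self _)) _
  have hAm : (∫⁻ γ, aM γ ∂μ) ≠ ⊤ := by
    simp only [haMdef, hΦmdef]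
    refine ne_top_of_le_ne_top hH1.ne ?_
    refine lintegral_mono fun γ => lintegral_mono fun x => lintegral_mono fun y => ?_
    exact mul_le_mul_right (ENNReal.ofReal_le_ofReal (neg_le_abs _)) _
  have hEp : (∫⁻ γ, eP γ ∂μ) ≠ ⊤ := by
    simp only [hePdef, hΦpdef]
    refine ne_top_of_le_ne_top hH2.ne ?_
    exact lintegral_mono fun γ => lintegral_mono fun x => lintegral_mono fun y =>
      ENNReal.ofReal_le_ofReal (le_abs_self _)
  have hEm : (∫⁻ γ, eM γ ∂μ) ≠ ⊤ := by
    simp only [heMdef, hΦmdef]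
    refine ne_top_of_le_ne_top hH2.ne ?_
    exact lintegral_mono fun γ => lintegral_mono fun x => lintegral_mono fun y =>
      ENNReal.ofReal_le_ofReal (neg_le_abs _)
  have hBp : (∫⁻ γ, bP γ ∂μ) ≠ ⊤ := by rw [chainP]; exact hEp
  have hBm : (∫⁻ γ, bM γ ∂μ) ≠ ⊤ := by rw [chainM]; exact hEm
  have hB'p : (∫⁻ γ, b'P γ ∂μ) ≠ ⊤ := by rw [chain'P]; exact hEp
  have hB'm : (∫⁻ γ, b'M γ ∂μ) ≠ ⊤ := by rw [chain'M]; exact hEm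
  have hDpe : ∫⁻ γ, dP γ ∂μ = ∫⁻ γ, eP γ ∂μ :=
    lintegral_congr_ae (by filter_upwards [hconf] with γ h using hdP_eq γ h)
  have hDme : ∫⁻ γ, dM γ ∂μ = ∫⁻ γ, eM γ ∂μ :=
    lintegral_congr_ae (by filter_upwards [hconf] with γ h using hdM_eq γ h)
  have hDp : (∫⁻ γ, dP γ ∂μ) ≠ ⊤ := by rw [hDpe]; exact hEp
  have hDm : (∫⁻ γ, dM γ ∂μ) ≠ ⊤ := by rw [hDme]; exact hEm
  -- a.e. goodness
  have hgood : ∀ᵐ γ ∂μ, IsConfig γ ∧ aP γ ≠ ⊤ ∧ aM γ ≠ ⊤ ∧ bP γ ≠ ⊤ ∧ bM γ ≠ ⊤ ∧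
      b'P γ ≠ ⊤ ∧ b'M γ ≠ ⊤ ∧ dP γ ≠ ⊤ ∧ dM γ ≠ ⊤ := by
    filter_upwards [hconf, ae_lt_top haPm hAp, ae_lt_top haMm hAm, ae_lt_top hbPm hBp,
      ae_lt_top hbMm hBm, ae_lt_top hb'Pm hB'p, ae_lt_top hb'Mm hB'm,
      ae_lt_top hdPm hDp, ae_lt_top hdMm hDm] with γ h0 h1 h2 h3 h4 h5 h6 h7 h8
    exact ⟨h0, h1.ne, h2.ne, h3.ne, h4.ne, h5.ne, h6.ne, h7.ne, h8.ne⟩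
  -- Term 1
  have hT1ae : (fun γ => ∫ x, ∫ y, r x γ * (r y γ - r y (γ + Measure.dirac x)) *
        H (γ + Measure.dirac x + Measure.dirac y) x y)
      =ᵐ[μ] fun γ => (aP γ + bM γ).toReal - (aM γ + bP γ).toReal := by
    filter_upwards [hgood] with γ hγ
    obtain ⟨hc, h1, h2, h3, h4, h5, h6, h7, h8⟩ := hγ
    have zrx : Measurable fun z : Pt d × Pt d => r z.1 γ :=
      hr.comp (measurable_fst.prodMk measurable_const)
    have zry : Measurable fun z : Pt d × Pt d => r z.2 γ :=
      hr.comp (measurable_snd.prodMk measurable_const)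
    have zry' : Measurable fun z : Pt d × Pt d => r z.2 (γ + Measure.dirac z.1) :=
      hr.comp (measurable_snd.prodMk
        (ks_meas_addDirac.comp (measurable_const.prodMk measurable_fst)))
    have zH : Measurable fun z : Pt d × Pt d =>
        H (γ + Measure.dirac z.1 + Measure.dirac z.2) z.1 z.2 :=
      hHmeas.comp ((ks_meas_addDirac.comp ((ks_meas_addDirac.comp
        (measurable_const.prodMk measurable_fst)).prodMk measurable_snd)).prodMk
        (measurable_fst.prodMk measurable_snd))
    have cSP : (∫⁻ x, ∫⁻ y, ENNReal.ofReal (r x γ * r y γ) *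
        ENNReal.ofReal (H (γ + Measure.dirac x + Measure.dirac y) x y)) = aP γ := by
      simp only [haPdef, hΦpdef]
      exact lintegral_congr fun x => lintegral_congr fun y => by
        rw [ENNReal.ofReal_mul (hrpos x γ)]
    have cSM : (∫⁻ x, ∫⁻ y, ENNReal.ofReal (r x γ * r y γ) *
        ENNReal.ofReal (-H (γ + Measure.dirac x + Measure.dirac y) x y)) = aM γ := by
      simp only [haMdef, hΦmdef]
      exact lintegral_congr fun x => lintegral_congr fun y => by
        rw [ENNReal.ofReal_mul (hrpos x γ)]
    have cTP : (∫⁻ x, ∫⁻ y, ENNReal.ofReal (r x γ * r y (γ + Measure.dirac x)) *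
        ENNReal.ofReal (H (γ + Measure.dirac x + Measure.dirac y) x y)) = bP γ := by
      simp only [hbPdef, hΦpdef]
      exact lintegral_congr fun x => lintegral_congr fun y => by
        rw [ENNReal.ofReal_mul (hrpos x γ)]
    have cTM : (∫⁻ x, ∫⁻ y, ENNReal.ofReal (r x γ * r y (γ + Measure.dirac x)) *
        ENNReal.ofReal (-H (γ + Measure.dirac x + Measure.dirac y) x y)) = bM γ := by
      simp only [hbMdef, hΦmdef]
      exact lintegral_congr fun x => lintegral_congr fun y => by
        rw [ENNReal.ofReal_mul (hrpos x γ)]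
    have e := ks_leb_sub (fun x y => r x γ * r y γ)
      (fun x y => r x γ * r y (γ + Measure.dirac x))
      (fun x y => H (γ + Measure.dirac x + Measure.dirac y) x y)
      (fun x y => mul_nonneg (hrpos _ _) (hrpos _ _))
      (fun x y => mul_nonneg (hrpos _ _) (hrpos _ _))
      (zrx.mul zry) (zrx.mul zry') zH
      (by rw [cSP]; exact h1) (by rw [cSM]; exact h2)
      (by rw [cTP]; exact h3) (by rw [cTM]; exact h4)
    have hcongr : (∫ x, ∫ y, r x γ * (r y γ - r y (γ + Measure.dirac x)) *
          H (γ + Measure.dirac x + Measure.dirac y) x y)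
        = ∫ x, ∫ y, (r x γ * r y γ - r x γ * r y (γ + Measure.dirac x)) *
          H (γ + Measure.dirac x + Measure.dirac y) x y :=
      integral_congr_ae (Filter.Eventually.of_forall fun x =>
        integral_congr_ae (Filter.Eventually.of_forall fun y => by ring))
    rw [hcongr, e, cSP, cSM, cTP, cTM]
  -- Term 2
  have hT2ae : (fun γ => ∫ y, ∫ x, r y γ * (r x γ - r x (γ + Measure.dirac y)) *
        H (γ + Measure.dirac x + Measure.dirac y) x y)
      =ᵐ[μ] fun γ => (aP γ + b'M γ).toReal - (aM γ + b'P γ).toReal := by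
    filter_upwards [hgood] with γ hγ
    obtain ⟨hc, h1, h2, h3, h4, h5, h6, h7, h8⟩ := hγ
    have zrx : Measurable fun z : Pt d × Pt d => r z.1 γ :=
      hr.comp (measurable_fst.prodMk measurable_const)
    have zry : Measurable fun z : Pt d × Pt d => r z.2 γ :=
      hr.comp (measurable_snd.prodMk measurable_const)
    have zrx' : Measurable fun z : Pt d × Pt d => r z.2 (γ + Measure.dirac z.1) :=
      hr.comp (measurable_snd.prodMk
        (ks_meas_addDirac.comp (measurable_const.prodMk measurable_fst)))
    have zH' : Measurable fun z : Pt d × Pt d =>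
        H (γ + Measure.dirac z.2 + Measure.dirac z.1) z.2 z.1 :=
      hHmeas.comp ((ks_meas_addDirac.comp ((ks_meas_addDirac.comp
        (measurable_const.prodMk measurable_snd)).prodMk measurable_fst)).prodMk
        (measurable_snd.prodMk measurable_fst))
    have zPp : Measurable fun z : Pt d × Pt d =>
        ENNReal.ofReal (r z.1 γ) * ENNReal.ofReal (r z.2 γ) *
          Φp (γ + Measure.dirac z.2 + Measure.dirac z.1) z.2 z.1 := by
      simp only [hΦpdef]
      exact (zrx.ennreal_ofReal.mul zry.ennreal_ofReal).mul zH'.ennreal_ofReal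
    have zPm : Measurable fun z : Pt d × Pt d =>
        ENNReal.ofReal (r z.1 γ) * ENNReal.ofReal (r z.2 γ) *
          Φm (γ + Measure.dirac z.2 + Measure.dirac z.1) z.2 z.1 := by
      simp only [hΦmdef]
      exact (zrx.ennreal_ofReal.mul zry.ennreal_ofReal).mul zH'.neg.ennreal_ofReal
    have cSP : (∫⁻ y, ∫⁻ x, ENNReal.ofReal (r y γ * r x γ) *
        ENNReal.ofReal (H (γ + Measure.dirac x + Measure.dirac y) x y)) = aP γ := by
      have step1 : (∫⁻ y, ∫⁻ x, ENNReal.ofReal (r y γ * r x γ) *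
          ENNReal.ofReal (H (γ + Measure.dirac x + Measure.dirac y) x y))
          = ∫⁻ y, ∫⁻ x, ENNReal.ofReal (r y γ) * ENNReal.ofReal (r x γ) *
            Φp (γ + Measure.dirac x + Measure.dirac y) x y := by
        simp only [hΦpdef]
        exact lintegral_congr fun y => lintegral_congr fun x => by
          rw [ENNReal.ofReal_mul (hrpos y γ)]
      rw [step1, lintegral_lintegral_swap zPp.aemeasurable]
      simp only [haPdef]
      exact lintegral_congr fun x => lintegral_congr fun y => by
        rw [mul_comm (ENNReal.ofReal (r y γ)) (ENNReal.ofReal (r x γ))]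
    have cSM : (∫⁻ y, ∫⁻ x, ENNReal.ofReal (r y γ * r x γ) *
        ENNReal.ofReal (-H (γ + Measure.dirac x + Measure.dirac y) x y)) = aM γ := by
      have step1 : (∫⁻ y, ∫⁻ x, ENNReal.ofReal (r y γ * r x γ) *
          ENNReal.ofReal (-H (γ + Measure.dirac x + Measure.dirac y) x y))
          = ∫⁻ y, ∫⁻ x, ENNReal.ofReal (r y γ) * ENNReal.ofReal (r x γ) *
            Φm (γ + Measure.dirac x + Measure.dirac y) x y := by
        simp only [hΦmdef]
        exact lintegral_congr fun y => lintegral_congr fun x => by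
          rw [ENNReal.ofReal_mul (hrpos y γ)]
      rw [step1, lintegral_lintegral_swap zPm.aemeasurable]
      simp only [haMdef]
      exact lintegral_congr fun x => lintegral_congr fun y => by
        rw [mul_comm (ENNReal.ofReal (r y γ)) (ENNReal.ofReal (r x γ))]
    have cTP : (∫⁻ y, ∫⁻ x, ENNReal.ofReal (r y γ * r x (γ + Measure.dirac y)) *
        ENNReal.ofReal (H (γ + Measure.dirac x + Measure.dirac y) x y)) = b'P γ := by
      simp only [hb'Pdef, hΦpdef]
      exact lintegral_congr fun y => lintegral_congr fun x => by
        rw [ENNReal.ofReal_mul (hrpos y γ)]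
    have cTM : (∫⁻ y, ∫⁻ x, ENNReal.ofReal (r y γ * r x (γ + Measure.dirac y)) *
        ENNReal.ofReal (-H (γ + Measure.dirac x + Measure.dirac y) x y)) = b'M γ := by
      simp only [hb'Mdef, hΦmdef]
      exact lintegral_congr fun y => lintegral_congr fun x => by
        rw [ENNReal.ofReal_mul (hrpos y γ)]
    have e := ks_leb_sub (fun y x => r y γ * r x γ)
      (fun y x => r y γ * r x (γ + Measure.dirac y))
      (fun y x => H (γ + Measure.dirac x + Measure.dirac y) x y)
      (fun x y => mul_nonneg (hrpos _ _) (hrpos _ _))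
      (fun x y => mul_nonneg (hrpos _ _) (hrpos _ _))
      (zrx.mul zry) (zrx.mul zrx') zH'
      (by rw [cSP]; exact h1) (by rw [cSM]; exact h2)
      (by rw [cTP]; exact h5) (by rw [cTM]; exact h6)
    have hcongr : (∫ y, ∫ x, r y γ * (r x γ - r x (γ + Measure.dirac y)) *
          H (γ + Measure.dirac x + Measure.dirac y) x y)
        = ∫ y, ∫ x, (r y γ * r x γ - r y γ * r x (γ + Measure.dirac y)) *
          H (γ + Measure.dirac x + Measure.dirac y) x y :=
      integral_congr_ae (Filter.Eventually.of_forall fun y =>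
        integral_congr_ae (Filter.Eventually.of_forall fun x => by ring))
    rw [hcongr, e, cSP, cSM, cTP, cTM]
  -- Term 3
  have hT3ae : (fun γ => ∫ x, ∫ y, r x γ * r y γ *
        H (γ + Measure.dirac x + Measure.dirac y) x y)
      =ᵐ[μ] fun γ => (aP γ).toReal - (aM γ).toReal := by
    filter_upwards [hgood] with γ hγ
    obtain ⟨hc, h1, h2, h3, h4, h5, h6, h7, h8⟩ := hγ
    have zrx : Measurable fun z : Pt d × Pt d => r z.1 γ :=
      hr.comp (measurable_fst.prodMk measurable_const)
    have zry : Measurable fun z : Pt d × Pt d => r z.2 γ :=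
      hr.comp (measurable_snd.prodMk measurable_const)
    have zH : Measurable fun z : Pt d × Pt d =>
        H (γ + Measure.dirac z.1 + Measure.dirac z.2) z.1 z.2 :=
      hHmeas.comp ((ks_meas_addDirac.comp ((ks_meas_addDirac.comp
        (measurable_const.prodMk measurable_fst)).prodMk measurable_snd)).prodMk
        (measurable_fst.prodMk measurable_snd))
    have cSP : (∫⁻ x, ∫⁻ y, ENNReal.ofReal (r x γ * r y γ) *
        ENNReal.ofReal (H (γ + Measure.dirac x + Measure.dirac y) x y)) = aP γ := by
      simp only [haPdef, hΦpdef]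
      exact lintegral_congr fun x => lintegral_congr fun y => by
        rw [ENNReal.ofReal_mul (hrpos x γ)]
    have cSM : (∫⁻ x, ∫⁻ y, ENNReal.ofReal (r x γ * r y γ) *
        ENNReal.ofReal (-H (γ + Measure.dirac x + Measure.dirac y) x y)) = aM γ := by
      simp only [haMdef, hΦmdef]
      exact lintegral_congr fun x => lintegral_congr fun y => by
        rw [ENNReal.ofReal_mul (hrpos x γ)]
    have cTP : (∫⁻ x, ∫⁻ y, ENNReal.ofReal ((0:ℝ)) *
        ENNReal.ofReal (H (γ + Measure.dirac x + Measure.dirac y) x y)) = 0 := by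
      simp
    have cTM : (∫⁻ x, ∫⁻ y, ENNReal.ofReal ((0:ℝ)) *
        ENNReal.ofReal (-H (γ + Measure.dirac x + Measure.dirac y) x y)) = 0 := by
      simp
    have e := ks_leb_sub (fun x y => r x γ * r y γ) (fun _ _ => (0:ℝ))
      (fun x y => H (γ + Measure.dirac x + Measure.dirac y) x y)
      (fun x y => mul_nonneg (hrpos _ _) (hrpos _ _))
      (fun x y => le_refl (0:ℝ))
      (zrx.mul zry) measurable_const zH
      (by rw [cSP]; exact h1) (by rw [cSM]; exact h2)
      (by rw [cTP]; exact ENNReal.zero_ne_top) (by rw [cTM]; exact ENNReal.zero_ne_top)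
    have hcongr : (∫ x, ∫ y, r x γ * r y γ *
          H (γ + Measure.dirac x + Measure.dirac y) x y)
        = ∫ x, ∫ y, (r x γ * r y γ - (0:ℝ)) *
          H (γ + Measure.dirac x + Measure.dirac y) x y :=
      integral_congr_ae (Filter.Eventually.of_forall fun x =>
        integral_congr_ae (Filter.Eventually.of_forall fun y => by ring))
    rw [hcongr, e, cSP, cSM, cTP, cTM, add_zero, add_zero]
  -- Term 4
  have hT4ae : (fun γ => ∫ x, (∫ y, H γ x y ∂(γ - Measure.dirac x)) ∂γ)
      =ᵐ[μ] fun γ => (dP γ).toReal - (dM γ).toReal := by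
    filter_upwards [hgood] with γ hγ
    obtain ⟨hc, h1, h2, h3, h4, h5, h6, h7, h8⟩ := hγ
    have hsliceP : ∀ x : Pt d, Measurable fun y => max (H γ x y) 0 :=
      fun x => (hHmeas.comp (measurable_const.prodMk
        (measurable_const.prodMk measurable_id))).max measurable_const
    have hsliceM : ∀ x : Pt d, Measurable fun y => max (-H γ x y) 0 :=
      fun x => ((hHmeas.comp (measurable_const.prodMk
        (measurable_const.prodMk measurable_id))).neg).max measurable_const
    have cP : (∫⁻ x, (∫⁻ y, ENNReal.ofReal (max (H γ x y) 0)
        ∂(γ - Measure.dirac x)) ∂γ) = eP γ := by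
      simp only [hePdef, hΦpdef]
      exact lintegral_congr fun x => lintegral_congr fun y => ks_ofReal_max _
    have cM : (∫⁻ x, (∫⁻ y, ENNReal.ofReal (max (-H γ x y) 0)
        ∂(γ - Measure.dirac x)) ∂γ) = eM γ := by
      simp only [heMdef, hΦmdef]
      exact lintegral_congr fun x => lintegral_congr fun y => ks_ofReal_max _
    have e := ks_double_sub (γ : Measure (Pt d)) (fun x => γ - Measure.dirac x)
      (f := fun x y => H γ x y)
      (g := fun x y => max (H γ x y) 0) (h := fun x y => max (-H γ x y) 0)
      (fun x y => (max_zero_sub_max_neg_zero_eq_self (H γ x y)).symm)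
      (fun x y => le_max_right _ _) (fun x y => le_max_right _ _)
      (Filter.Eventually.of_forall fun x => (hsliceP x).aemeasurable)
      (Filter.Eventually.of_forall fun x => (hsliceM x).aemeasurable)
      (ks_aemeasurable hc _) (ks_aemeasurable hc _)
      (by rw [cP, ← hdP_eq γ hc]; exact h7) (by rw [cM, ← hdM_eq γ hc]; exact h8)
    rw [e, cP, cM, ← hdP_eq γ hc, ← hdM_eq γ hc]
  -- assembling the Bochner integrals
  have hfin1 : (∫⁻ γ, (aP γ + bM γ) ∂μ) ≠ ⊤ := by
    rw [lintegral_add_left haPm]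
    exact ENNReal.add_ne_top.2 ⟨hAp, hBm⟩
  have hfin2 : (∫⁻ γ, (aM γ + bP γ) ∂μ) ≠ ⊤ := by
    rw [lintegral_add_left haMm]
    exact ENNReal.add_ne_top.2 ⟨hAm, hBp⟩
  have hfin3 : (∫⁻ γ, (aP γ + b'M γ) ∂μ) ≠ ⊤ := by
    rw [lintegral_add_left haPm]
    exact ENNReal.add_ne_top.2 ⟨hAp, hB'm⟩
  have hfin4 : (∫⁻ γ, (aM γ + b'P γ) ∂μ) ≠ ⊤ := by
    rw [lintegral_add_left haMm]
    exact ENNReal.add_ne_top.2 ⟨hAm, hB'p⟩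
  have hT1 : (∫ γ, (∫ x, ∫ y, r x γ * (r y γ - r y (γ + Measure.dirac x)) *
        H (γ + Measure.dirac x + Measure.dirac y) x y) ∂μ)
      = (∫⁻ γ, (aP γ + bM γ) ∂μ).toReal - (∫⁻ γ, (aM γ + bP γ) ∂μ).toReal :=
    ks_int_toReal_sub μ (haPm.add hbMm).aemeasurable (haMm.add hbPm).aemeasurable
      hfin1 hfin2 hT1ae
  have hT2 : (∫ γ, (∫ y, ∫ x, r y γ * (r x γ - r x (γ + Measure.dirac y)) *
        H (γ + Measure.dirac x + Measure.dirac y) x y) ∂μ)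
      = (∫⁻ γ, (aP γ + b'M γ) ∂μ).toReal - (∫⁻ γ, (aM γ + b'P γ) ∂μ).toReal :=
    ks_int_toReal_sub μ (haPm.add hb'Mm).aemeasurable (haMm.add hb'Pm).aemeasurable
      hfin3 hfin4 hT2ae
  have hT3 : (∫ γ, (∫ x, ∫ y, r x γ * r y γ *
        H (γ + Measure.dirac x + Measure.dirac y) x y) ∂μ)
      = (∫⁻ γ, aP γ ∂μ).toReal - (∫⁻ γ, aM γ ∂μ).toReal :=
    ks_int_toReal_sub μ haPm.aemeasurable haMm.aemeasurable hAp hAm hT3ae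
  have hT4 : (∫ γ, (∫ x, (∫ y, H γ x y ∂(γ - Measure.dirac x)) ∂γ) ∂μ)
      = (∫⁻ γ, dP γ ∂μ).toReal - (∫⁻ γ, dM γ ∂μ).toReal :=
    ks_int_toReal_sub μ hdPm.aemeasurable hdMm.aemeasurable hDp hDm hT4ae
  constructor
  · rw [hT1, hT2, lintegral_add_left haPm, lintegral_add_left haPm,
      lintegral_add_left haMm, lintegral_add_left haMm, chainM, chain'M, chainP, chain'P]
  · rw [hT1, hT3, hT4, lintegral_add_left haPm, lintegral_add_left haMm,
      chainM, chainP, hDpe, hDme,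
      ENNReal.toReal_add hAp hEm, ENNReal.toReal_add hAm hEp]
    ring

end
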